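/- Let X be a set with an M^{1+n}-action such that every element is k-supported on some co-infinite set for each k. Let x ∈ X, (u_0,...,u_n) ∈ M^{1+n}, and A ⊆ ω co-infinite such that (u_0,...,u_n).x is k-supported on u_k(A). Then x is k-supported on A. -/
import Mathlib

set_option synthInstance.maxHeartbeats 1000000
set_option maxHeartbeats 1000000

/-- The monoid of injective self-maps of ω (modelled as ℕ), under composition. -/
def M : Submonoid (Function.End ℕ) where
  carrier := {f | Function.Injective f}
  mul_mem' := fun hf hg => hf.comp hg
  one_mem' := fun _ _ h => h

/-- `x` is supported on `A` if it is fixed by every injection fixing `A` pointwise. -/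
def Supported {X : Type*} [MulAction M X] (A : Set ℕ) (x : X) : Prop :=
  ∀ u : M, (∀ a ∈ A, u.1 a = a) → u • x = x

/-- `x` is `k`-supported on `A`: it is fixed by `i k u` for every injection `u`
fixing `A` pointwise, where `i k` inserts into the `(1+k)`-th factor of `M^{1+n}`. -/
def KSupported {n : ℕ} {X : Type*} [MulAction (Fin (n+1) → M) X]
    (k : Fin (n+1)) (A : Set ℕ) (x : X) : Prop :=
  ∀ u : M, (∀ a ∈ A, u.1 a = a) →
    (fun j => if j = k then u else 1 : Fin (n+1) → M) • x = x

open Function Set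

/-- If `c` has co-infinite range, then any injection `u` can be extended:
`c` factors as `a ∘ u` for some injection `a`. -/
lemma exists_left_factor (u c : ℕ → ℕ) (hu : Injective u) (hc : Injective c)
    (hcc : ((Set.range c)ᶜ : Set ℕ).Infinite) :
    ∃ a : ℕ → ℕ, Injective a ∧ a ∘ u = c := by
  classical
  let θ := hcc.natEmbedding
  refine ⟨fun x => if h : ∃ m, u m = x then c h.choose else (θ x).1, ?_, ?_⟩
  · intro x y hxy
    dsimp only at hxy
    by_cases hx : ∃ m, u m = x <;> by_cases hy : ∃ m, u m = y
    · rw [dif_pos hx, dif_pos hy] at hxy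
      rw [← hx.choose_spec, ← hy.choose_spec, hc hxy]
    · rw [dif_pos hx, dif_neg hy] at hxy
      exact absurd ⟨hx.choose, hxy⟩ (θ y).2
    · rw [dif_neg hx, dif_pos hy] at hxy
      exact absurd ⟨hy.choose, hxy.symm⟩ (θ x).2
    · rw [dif_neg hx, dif_neg hy] at hxy
      exact θ.injective (Subtype.coe_injective hxy)
  · funext m
    have hm : ∃ m', u m' = u m := ⟨m, rfl⟩
    simp only [Function.comp_apply, dif_pos hm]
    exact congrArg c (hu hm.choose_spec)

/-- A "shrinking" injection supported inside the range of an injection `φ`: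
it fixes everything outside `range φ`, maps `range φ` into itself, and its
range is co-infinite. -/
lemma shrink (φ : ℕ → ℕ) (hφ : Injective φ) :
    ∃ e : ℕ → ℕ, Injective e ∧ (∀ x, x ∉ range φ → e x = x) ∧
      (∀ x, x ∈ range φ → e x ∈ range φ) ∧ ((range e)ᶜ : Set ℕ).Infinite := by
  classical
  refine ⟨fun x => if h : ∃ m, φ m = x then φ (2 * h.choose) else x, ?_, ?_, ?_, ?_⟩
  · intro x y hxy
    dsimp only at hxy
    by_cases hx : ∃ m, φ m = x <;> by_cases hy : ∃ m, φ m = y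
    · rw [dif_pos hx, dif_pos hy] at hxy
      have := hφ hxy
      rw [← hx.choose_spec, ← hy.choose_spec]
      exact congrArg φ (by omega)
    · rw [dif_pos hx, dif_neg hy] at hxy
      exact absurd ⟨2 * hx.choose, hxy⟩ hy
    · rw [dif_neg hx, dif_pos hy] at hxy
      exact absurd ⟨2 * hy.choose, hxy.symm⟩ hx
    · rwa [dif_neg hx, dif_neg hy] at hxy
  · intro x hx
    exact dif_neg (by simpa [Set.mem_range] using hx)
  · intro x hx
    have hx' : ∃ m, φ m = x := hx
    dsimp only
    rw [dif_pos hx']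
    exact ⟨_, rfl⟩
  · have hsub : range (fun m => φ (2 * m + 1)) ⊆ (range (fun x =>
        if h : ∃ m, φ m = x then φ (2 * h.choose) else x))ᶜ := by
      rintro t ⟨m, rfl⟩ ⟨x, hx⟩
      dsimp only at hx
      by_cases hx' : ∃ m', φ m' = x
      · rw [dif_pos hx'] at hx
        have := hφ hx
        omega
      · rw [dif_neg hx'] at hx
        exact hx' ⟨2 * m + 1, hx.symm⟩
    exact (Set.infinite_range_of_injective
      (fun a b hab => by have := hφ hab; omega)).mono hsub

/-- Two infinite subsets of ℕ contain disjoint "enumerated" infinite subsets. -/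
lemma disj_inj (S T : Set ℕ) (hS : S.Infinite) (hT : T.Infinite) :
    ∃ φ ψ : ℕ → ℕ, Injective φ ∧ Injective ψ ∧ range φ ⊆ S ∧ range ψ ⊆ T ∧
      ∀ m n, φ m ≠ ψ n := by
  by_cases hST : (S ∩ T).Infinite
  · let g := hST.natEmbedding
    refine ⟨fun n => (g (2 * n)).1, fun n => (g (2 * n + 1)).1, ?_, ?_, ?_, ?_, ?_⟩
    · intro a b hab
      have := g.injective (Subtype.coe_injective hab); omega
    · intro a b hab
      have := g.injective (Subtype.coe_injective hab); omega
    · rintro t ⟨m, rfl⟩; exact ((g (2 * m)).2).1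
    · rintro t ⟨m, rfl⟩; exact ((g (2 * m + 1)).2).2
    · intro m m' hcon
      have := g.injective (Subtype.coe_injective hcon); omega
  · have h1 : (S \ T).Infinite := by
      have he : S \ (S ∩ T) = S \ T := by ext t; simp [Set.mem_diff]
      rw [← he]; exact hS.diff (Set.not_infinite.mp hST)
    have h2 : (T \ S).Infinite := by
      have he : T \ (S ∩ T) = T \ S := by ext t; simp [Set.mem_diff]
      rw [← he]; exact hT.diff (Set.not_infinite.mp hST)
    let g1 := h1.natEmbedding
    let g2 := h2.natEmbedding
    refine ⟨fun n => (g1 n).1, fun n => (g2 n).1,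
      fun a b hab => g1.injective (Subtype.coe_injective hab),
      fun a b hab => g2.injective (Subtype.coe_injective hab),
      ?_, ?_, ?_⟩
    · rintro t ⟨m, rfl⟩; exact ((g1 m).2).1
    · rintro t ⟨m, rfl⟩; exact ((g2 m).2).1
    · intro m m' hcon
      dsimp only at hcon
      have hmS : (g1 m).1 ∈ S \ T := (g1 m).2
      have hnT : (g2 m').1 ∈ T \ S := (g2 m').2
      rw [hcon] at hmS
      exact hnT.2 hmS.1

/-- If each component of `E` fixes a corresponding `k`-support of `y` pointwise,
then `E • y = y`. Proven by peeling off coordinates one at a time. -/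
lemma prod_fix {n : ℕ} {X : Type*} [MulAction (Fin (n+1) → M) X] (y : X)
    (B : Fin (n+1) → Set ℕ) (hB : ∀ j, KSupported j (B j) y) :
    ∀ (S : Finset (Fin (n+1))) (E : Fin (n+1) → M),
      (∀ j, j ∉ S → E j = 1) → (∀ j, ∀ a ∈ B j, (E j).1 a = a) → E • y = y := by
  intro S
  classical
  induction S using Finset.induction_on with
  | empty =>
    intro E h1 _
    have hE : E = 1 := funext fun j => h1 j (Finset.notMem_empty j)
    rw [hE, one_smul]
  | @insert kk S hkk ih =>
    intro E h1 h2
    have hupd : Function.update E kk 1 • y = y := by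
      apply ih
      · intro j hj
        by_cases hjk : j = kk
        · subst hjk; simp [Function.update_self]
        · rw [Function.update_of_ne hjk]
          exact h1 j (by simp [Finset.mem_insert, hjk, hj])
      · intro j a ha
        by_cases hjk : j = kk
        · subst hjk; simp [Function.update_self]
          rfl
        · rw [Function.update_of_ne hjk]
          exact h2 j a ha
    have hdec : E = (fun j => if j = kk then E kk else 1) * Function.update E kk 1 := by
      funext j
      by_cases hjk : j = kk
      · subst hjk
        show E j = (if j = j then E j else 1) * Function.update E j 1 j
        simp [Function.update_self]
      · show E j = (if j = kk then E kk else 1) * Function.update E kk 1 j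
        simp [hjk, Function.update_of_ne hjk]
    rw [hdec, mul_smul, hupd]
    exact hB kk (E kk) (h2 kk)

/-- On a mild action, every `u : M^{1+n}` acts injectively. -/
lemma cancel {n : ℕ} {X : Type*} [MulAction (Fin (n+1) → M) X]
    (hmild : ∀ (x : X) (k : Fin (n+1)), ∃ A : Set ℕ, (Aᶜ : Set ℕ).Infinite ∧ KSupported k A x)
    (u : Fin (n+1) → M) {y z : X} (huz : u • y = u • z) : y = z := by
  classical
  choose B hBinf hBsup using fun kk => hmild y kk
  choose C hCinf hCsup using fun kk => hmild z kk
  choose φ ψ hφ hψ hφS hψT hne using fun j => disj_inj _ _ (hBinf j) (hCinf j)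
  choose e he hefix hemem heco using fun j => shrink (φ j) (hφ j)
  choose f hf hffix hfmem hfco using fun j => shrink (ψ j) (hψ j)
  set E : Fin (n+1) → M := fun j => ⟨e j, he j⟩ with hE
  set F : Fin (n+1) → M := fun j => ⟨f j, hf j⟩ with hF
  -- star: whatever u does to y and z, any map with co-infinite-range components
  -- does the same to y and z.
  have star : ∀ c : Fin (n+1) → M, (∀ j, ((range (c j).1)ᶜ : Set ℕ).Infinite) →
      c • y = c • z := by
    intro c hc
    have hex : ∀ j, ∃ a : ℕ → ℕ, Injective a ∧ a ∘ (u j).1 = (c j).1 :=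
      fun j => exists_left_factor _ _ (u j).2 (c j).2 (hc j)
    choose a ha hacomp using hex
    have hmul : (fun j => (⟨a j, ha j⟩ : M)) * u = c := by
      funext j
      exact Subtype.ext (hacomp j)
    calc c • y = ((fun j => (⟨a j, ha j⟩ : M)) * u) • y := by rw [hmul]
      _ = (fun j => (⟨a j, ha j⟩ : M)) • (u • y) := mul_smul _ _ _
      _ = (fun j => (⟨a j, ha j⟩ : M)) • (u • z) := by rw [huz]
      _ = ((fun j => (⟨a j, ha j⟩ : M)) * u) • z := (mul_smul _ _ _).symm
      _ = c • z := by rw [hmul]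
  have hEy : E • y = y := by
    apply prod_fix y B hBsup Finset.univ E (fun j hj => absurd (Finset.mem_univ j) hj)
    intro j a ha
    exact hefix j a (fun hm => hφS j hm ha)
  have hFz : F • z = z := by
    apply prod_fix z C hCsup Finset.univ F (fun j hj => absurd (Finset.mem_univ j) hj)
    intro j a ha
    exact hffix j a (fun hm => hψT j hm ha)
  have hFy : F • y = z := (star F (fun j => hfco j)).trans hFz
  have hEz : E • z = y := (star E (fun j => heco j)).symm.trans hEy
  have hnotpsi : ∀ j t, t ∈ range (φ j) → t ∉ range (ψ j) := by
    rintro j t ⟨m, rfl⟩ ⟨m', hm'⟩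
    exact hne j m m' hm'.symm
  have comm : E * F = F * E := by
    funext j
    apply Subtype.ext
    funext t
    show e j (f j t) = f j (e j t)
    by_cases h1 : t ∈ range (φ j)
    · rw [hffix j t (hnotpsi j t h1), hffix j _ (hnotpsi j _ (hemem j t h1))]
    · by_cases h2 : t ∈ range (ψ j)
      · rw [hefix j t h1]
        have := hfmem j t h2
        rw [hefix j _ (fun hc => hnotpsi j _ hc this)]
      · rw [hefix j t h1, hffix j t h2, hefix j t h1]
  have hGy : (E * F) • y = y := by rw [mul_smul, hFy, hEz]
  have hGz : (E * F) • z = z := by rw [comm, mul_smul, hEz, hFy]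
  have hGco : ∀ j, ((range (((E * F) j).1))ᶜ : Set ℕ).Infinite := by
    intro j
    apply (heco j).mono
    have : range (((E * F) j).1) ⊆ range (e j) := by
      show range (e j ∘ f j) ⊆ range (e j)
      exact Set.range_comp_subset_range (f j) (e j)
    exact Set.compl_subset_compl.mpr this
  have := star (E * F) hGco
  rw [hGy, hGz] at this
  exact this

theorem stmt_19 {n : ℕ} {X : Type*} [MulAction (Fin (n+1) → M) X]
    (hmild : ∀ (x : X) (k : Fin (n+1)), ∃ A : Set ℕ, (Aᶜ : Set ℕ).Infinite ∧ KSupported k A x)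
    (x : X) (u : Fin (n+1) → M) (k : Fin (n+1)) (A : Set ℕ)
    (hA : (Aᶜ : Set ℕ).Infinite)
    (h : KSupported k ((u k).1 '' A) (u • x)) :
    KSupported k A x := by
  classical
  intro v hv
  have huk : Injective (u k).1 := (u k).2
  set w : ℕ → ℕ := fun t => if hm : ∃ m, (u k).1 m = t then (u k).1 (v.1 hm.choose) else t
    with hwdef
  have hwu : ∀ m, w ((u k).1 m) = (u k).1 (v.1 m) := by
    intro m
    have hm : ∃ m', (u k).1 m' = (u k).1 m := ⟨m, rfl⟩
    rw [hwdef]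
    simp only [dif_pos hm]
    exact congrArg _ (congrArg v.1 (huk hm.choose_spec))
  have hwinj : Injective w := by
    intro s t hst
    rw [hwdef] at hst
    dsimp only at hst
    by_cases hs : ∃ m, (u k).1 m = s <;> by_cases ht : ∃ m, (u k).1 m = t
    · simp only [dif_pos hs, dif_pos ht] at hst
      rw [← hs.choose_spec, ← ht.choose_spec, v.2 (huk hst)]
    · simp only [dif_pos hs, dif_neg ht] at hst
      exact absurd ⟨_, hst⟩ ht
    · simp only [dif_neg hs, dif_pos ht] at hst
      exact absurd ⟨_, hst.symm⟩ hs
    · simpa only [dif_neg hs, dif_neg ht] using hst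
  have hwfix : ∀ b ∈ (u k).1 '' A, w b = b := by
    rintro b ⟨a, haA, rfl⟩
    rw [hwu a, hv a haA]
  have hmul : u * (fun j => if j = k then v else 1) =
      (fun j => if j = k then (⟨w, hwinj⟩ : M) else 1) * u := by
    funext j
    by_cases hj : j = k
    · subst hj
      show u j * (if j = j then v else 1) = (if j = j then (⟨w, hwinj⟩ : M) else 1) * u j
      rw [if_pos rfl, if_pos rfl]
      apply Subtype.ext
      funext m
      exact (hwu m).symm
    · show u j * (if j = k then v else 1) = (if j = k then (⟨w, hwinj⟩ : M) else 1) * u j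
      rw [if_neg hj, if_neg hj, mul_one, one_mul]
  have key : u • ((fun j => if j = k then v else 1 : Fin (n+1) → M) • x) = u • x := by
    rw [← mul_smul, hmul, mul_smul]
    exact h ⟨w, hwinj⟩ hwfix
  exact cancel hmild u key
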